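/- Suppose there exists a sequence ⟨f_m : m < ω⟩ of functions from ω₁ to ω₁ such that for every cofinal subset B ⊆ ω₁ there exists m < ω with f_m[B] = ω₁. Then there exists a sequence ⟨g_n : n < ω⟩ of functions from ω₁ to ω₁ such that for every uncountable pairwise disjoint family ℬ ⊆ [ω₁]^{<ω} of nonempty finite subsets of ω₁ there are infinitely many n < ω such that for every γ < ω₁ there is b ∈ ℬ with g_n[b] = {γ}. -/

import Mathlib

noncomputable section

open Cardinal Set Ordinal

/-- The set of countable ordinals, as a type of order type `ω₁`. -/
abbrev Omega1 : Type := Ordinal.ToType (Ordinal.omega 1)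

instance : Nonempty Omega1 :=
  Ordinal.toType_nonempty_iff_ne_zero.2
    (Ordinal.omega0_pos.trans Ordinal.omega0_lt_omega_one).ne'

/-- Proposition (M): there is a nonmeager set of reals of cardinality `ℵ₁`. -/
def PropM : Prop := ∃ X : Set ℝ, #X = Cardinal.aleph 1 ∧ ¬ IsMeagre X

/-- Countable pigeonhole: an uncountable set has an uncountable fiber under any map to a
countable type. -/
private lemma exists_uncountable_fiber {X C : Type*} [Countable C] {S : Set X}
    (hS : ¬ S.Countable) (D : X → C) : ∃ c, ¬ {b ∈ S | D b = c}.Countable := by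
  by_contra hc
  push_neg at hc
  apply hS
  have hU : S = ⋃ c : C, {b ∈ S | D b = c} := by
    ext b; simp
  rw [hU]
  exact Set.countable_iUnion hc

/-- Initial segments of `Omega1` are countable. -/
private lemma countable_Iic_omega1 (α : Omega1) : (Set.Iic α).Countable := by
  classical
  let e := Ordinal.ToType.mk (o := Ordinal.omega 1)
  set oα : Ordinal := (e.symm α : Ordinal) with hoαdef
  have hoα : oα < Ordinal.omega 1 := (e.symm α).2
  have hcard : (oα + 1).card ≤ ℵ₀ := by
    have h2 : oα.card < ℵ₁ := by
      apply Cardinal.lt_ord.mp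
      rwa [Cardinal.ord_aleph]
    have h3 : oα.card ≤ ℵ₀ := by
      rwa [← Cardinal.succ_aleph0, Order.lt_succ_iff] at h2
    calc (oα + 1).card = oα.card + 1 := by rw [Ordinal.card_add, Ordinal.card_one]
      _ ≤ ℵ₀ + ℵ₀ := add_le_add h3 (Cardinal.one_le_aleph0)
      _ = ℵ₀ := Cardinal.aleph0_add_aleph0
  have hIio : (Set.Iio (oα + 1)).Countable := by
    rw [← Set.countable_coe_iff, ← Cardinal.mk_le_aleph0_iff, Ordinal.mk_Iio_ordinal,
      ← Cardinal.lift_aleph0.{1, 0}]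
    exact Cardinal.lift_le.mpr hcard
  have hS : (Subtype.val ⁻¹' (Set.Iio (oα + 1)) : Set ↥(Set.Iio (Ordinal.omega 1))).Countable :=
    hIio.preimage Subtype.val_injective
  refine Set.Countable.mono ?_ (hS.image (fun p => e p))
  intro β hβ
  refine ⟨e.symm β, ?_, e.apply_symm_apply β⟩
  have hle : e.symm β ≤ e.symm α := e.symm.monotone hβ
  have hle' : ((e.symm β : Ordinal)) ≤ oα := by exact_mod_cast hle
  have : oα < oα + 1 := by
    rw [Ordinal.add_one_eq_succ]; exact Order.lt_succ oα
  exact lt_of_le_of_lt hle' this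

/-- Uncountable subsets of `Omega1` are cofinal. -/
private lemma cofinal_of_uncountable {B : Set Omega1} (hB : ¬ B.Countable) :
    ∀ α : Omega1, ∃ β ∈ B, α ≤ β := by
  intro α
  by_contra hc
  push_neg at hc
  exact hB (Set.Countable.mono (fun β hβ => le_of_lt (hc β hβ)) (countable_Iic_omega1 α))

/-- A simple association-list lookup. -/
private def look (p : Finset ℕ) : List (Finset ℕ × ℕ) → ℕ
  | [] => 0
  | (q, n) :: rest => if q = p then n else look p rest

private lemma look_map {β : Type*} (key : β → Finset ℕ) (val : β → ℕ) (a : β) :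
    ∀ l : List β, a ∈ l → (∀ c ∈ l, key c = key a → c = a) →
      look (key a) (l.map fun c => (key c, val c)) = val a := by
  intro l
  induction l with
  | nil => intro ha _; simp at ha
  | cons c t ih =>
    intro ha hinj
    simp only [List.map_cons]
    by_cases hc : c = a
    · subst hc
      simp [look]
    · have hkey : key c ≠ key a := fun h => hc (hinj c List.mem_cons_self h)
      have ha' : a ∈ t := by
        rcases List.mem_cons.mp ha with h | h
        · exact absurd h.symm hc
        · exact h
      simp only [look, if_neg hkey]
      exact ih ha' (fun c' hc' => hinj c' (List.mem_cons_of_mem _ hc'))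

/-- There is an injection of `Omega1` into `ℕ → Bool`. -/
private lemma exists_injection_omega1 : ∃ x : Omega1 → ℕ → Bool, Function.Injective x := by
  have h1 : #Omega1 ≤ #(ℕ → Bool) := by
    rw [Cardinal.mk_toType, Ordinal.card_omega, ← Cardinal.power_def, Cardinal.mk_bool,
      Cardinal.mk_nat, Cardinal.two_power_aleph0]
    exact Cardinal.aleph_one_le_continuum
  obtain ⟨emb⟩ := Cardinal.le_def _ _ |>.mp h1
  exact ⟨emb, emb.injective⟩

/-- From a sequence `⟨f_m⟩` as in Sierpiński's onto-mapping principle one obtains a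
sequence `⟨g_n⟩` such that for every uncountable pairwise disjoint family `ℬ` of
nonempty finite subsets of `ω₁`, for infinitely many `n`, for every `γ < ω₁` there is
`b ∈ ℬ` with `g_n[b] = {γ}`. -/
theorem statement2
    (h : ∃ f : ℕ → Omega1 → Omega1,
      ∀ B : Set Omega1, (∀ α : Omega1, ∃ β ∈ B, α ≤ β) →
        ∃ m : ℕ, f m '' B = Set.univ) :
    ∃ g : ℕ → Omega1 → Omega1,
      ∀ ℬ : Set (Finset Omega1), ¬ ℬ.Countable →
        (∀ b ∈ ℬ, ∀ b' ∈ ℬ, b ≠ b' → Disjoint b b') →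
        (∀ b ∈ ℬ, b.Nonempty) →
        {n : ℕ | ∀ γ : Omega1, ∃ b ∈ ℬ, (g n) '' ↑b = {γ}}.Infinite := by
  classical
  obtain ⟨f, hf⟩ := h
  obtain ⟨x, hxinj⟩ := exists_injection_omega1
  -- surjections onto initial segments
  have hsex : ∀ α : Omega1, ∃ sα : ℕ → Omega1, ∀ β ≤ α, ∃ n, sα n = β := by
    intro α
    obtain ⟨sα, hsub⟩ := Set.countable_iff_exists_subset_range.mp (countable_Iic_omega1 α)
    exact ⟨sα, fun β hβ => hsub hβ⟩
  choose s hs using hsex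
  -- patterns
  let pat : ℕ → Omega1 → Finset ℕ := fun M α => (Finset.range M).filter (fun j => x α j = true)
  have hpat : ∀ M (α β : Omega1), pat M α = pat M β → ∀ j < M, x α j = x β j := by
    intro M α β hMeq j hj
    have := Finset.ext_iff.mp hMeq j
    simp only [pat, Finset.mem_filter, Finset.mem_range] at this
    cases hb : x α j <;> cases hb' : x β j <;> simp_all
  -- separating levels
  have hMex : ∀ b : Finset Omega1, ∃ M : ℕ, ∀ α ∈ b, ∀ β ∈ b, α ≠ β → pat M α ≠ pat M β := by
    intro b
    have key : ∀ α β : Omega1, α ≠ β → ∃ j, x α j ≠ x β j := by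
      intro α β hab
      by_contra hcon
      push_neg at hcon
      exact hab (hxinj (funext hcon))
    let jp : Omega1 → Omega1 → ℕ := fun α β => if h : ∃ j, x α j ≠ x β j then h.choose else 0
    refine ⟨(b.sup fun α => b.sup fun β => jp α β) + 1, ?_⟩
    intro α ha β hb hne heq
    have hex := key α β hne
    have hjp : x α (jp α β) ≠ x β (jp α β) := by
      simp only [jp, dif_pos hex]
      exact hex.choose_spec
    have hlt : jp α β < (b.sup fun α => b.sup fun β => jp α β) + 1 := by
      have h1 : jp α β ≤ b.sup fun β' => jp α β' := Finset.le_sup hb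
      have h2 : (b.sup fun β' => jp α β') ≤ b.sup fun α' => b.sup fun β' => jp α' β' :=
        Finset.le_sup (f := fun α' => b.sup fun β' => jp α' β') ha
      exact Nat.lt_succ_of_le (le_trans h1 h2)
    exact hjp (hpat _ _ _ heq _ hlt)
  choose Mb hMb using hMex
  -- canonical minimum
  let mmin : Finset Omega1 → Omega1 := fun b =>
    if hb : b.Nonempty then b.min' hb else Classical.arbitrary Omega1
  -- codes
  let code : Finset Omega1 → Omega1 → ℕ := fun b α =>
    if hc : ∃ n, s α n = mmin b then hc.choose else 0
  -- data lists
  let Lb : Finset Omega1 → List (Finset ℕ × ℕ) := fun b =>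
    (b.sort (· ≤ ·)).map fun α => (pat (Mb b) α, code b α)
  -- the candidate functions
  let G0 : ℕ × ℕ × List (Finset ℕ × ℕ) → Omega1 → Omega1 := fun w α =>
    f w.1 (s α (look (pat w.2.1 α) w.2.2))
  obtain ⟨d, hd⟩ := exists_surjective_nat ((ℕ × ℕ × List (Finset ℕ × ℕ)) × ℕ)
  refine ⟨fun n => G0 (d n).1, ?_⟩
  intro ℬ hUnc hdisj hne
  -- thinning
  obtain ⟨c, hA⟩ := exists_uncountable_fiber hUnc (fun b => (Mb b, Lb b))
  set A : Set (Finset Omega1) := {b ∈ ℬ | (Mb b, Lb b) = c} with hAdef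
  -- the set of minima
  have hinj : Set.InjOn mmin A := by
    intro b hb b' hb' heq
    by_contra hbb
    have hd1 := hdisj b hb.1 b' hb'.1 hbb
    have h1 : mmin b ∈ b := by
      have hbne := hne b hb.1
      simp only [mmin, dif_pos hbne]
      exact b.min'_mem hbne
    have h2 : mmin b' ∈ b' := by
      have hbne := hne b' hb'.1
      simp only [mmin, dif_pos hbne]
      exact b'.min'_mem hbne
    rw [heq] at h1
    exact Finset.disjoint_left.mp hd1 (heq ▸ h1) h2
  have hBunc : ¬ (mmin '' A).Countable := by
    intro hcnt
    exact hA (Set.countable_of_injective_of_countable_image hinj hcnt)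
  obtain ⟨m, hm⟩ := hf (mmin '' A) (cofinal_of_uncountable hBunc)
  -- constancy of the good function on members of A
  have hconst : ∀ b ∈ A, ∀ α ∈ b, G0 (m, c.1, c.2) α = f m (mmin b) := by
    intro b hb α hα
    have hbc : Mb b = c.1 ∧ Lb b = c.2 := by
      have := hb.2
      exact ⟨congrArg Prod.fst this, congrArg Prod.snd this⟩
    show f m (s α (look (pat c.1 α) c.2)) = f m (mmin b)
    rw [← hbc.1, ← hbc.2]
    have hlook : look (pat (Mb b) α) (Lb b) = code b α := by
      apply look_map (key := pat (Mb b)) (val := code b) α (b.sort (· ≤ ·))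
      · rw [Finset.mem_sort]; exact hα
      · intro c' hc' hkey
        by_contra hnec
        exact hMb b c' (by rwa [← Finset.mem_sort (· ≤ ·)]) α hα hnec hkey
    rw [hlook]
    have hbne : b.Nonempty := hne b hb.1
    have hle : mmin b ≤ α := by
      simp only [mmin, dif_pos hbne]
      exact b.min'_le α hα
    have hexn : ∃ n, s α n = mmin b := hs α (mmin b) hle
    simp only [code, dif_pos hexn]
    rw [hexn.choose_spec]
  -- indices whose data is the good tuple work
  have hwork : ∀ n : ℕ, (d n).1 = (m, c.1, c.2) →
      ∀ γ : Omega1, ∃ b ∈ ℬ, G0 (d n).1 '' ↑b = {γ} := by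
    intro n hdn γ
    have hγ : γ ∈ f m '' (mmin '' A) := by rw [hm]; exact Set.mem_univ γ
    obtain ⟨β, hβB, hfβ⟩ := hγ
    obtain ⟨b, hbA, hmb⟩ := hβB
    refine ⟨b, hbA.1, ?_⟩
    rw [hdn]
    ext y
    constructor
    · rintro ⟨α, hα, rfl⟩
      have := hconst b hbA α (by exact_mod_cast hα)
      rw [Set.mem_singleton_iff, this, hmb, hfβ]
    · rintro hy
      rw [Set.mem_singleton_iff] at hy
      obtain ⟨α, hα⟩ := hne b hbA.1
      refine ⟨α, by exact_mod_cast hα, ?_⟩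
      rw [hconst b hbA α hα, hmb, hfβ, hy]
  -- infinitude
  have hinf : {p : (ℕ × ℕ × List (Finset ℕ × ℕ)) × ℕ | p.1 = (m, c.1, c.2)}.Infinite := by
    apply Set.infinite_of_injective_forall_mem (f := fun j : ℕ => ((m, c.1, c.2), j))
    · intro a b hab
      simpa using congrArg Prod.snd hab
    · intro j
      rfl
  have hpre : (d ⁻¹' {p | p.1 = (m, c.1, c.2)}).Infinite :=
    hinf.preimage (by rw [hd.range_eq]; exact Set.subset_univ _)
  apply hpre.mono
  intro n hn γ
  exact hwork n hn γ
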